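/- Let α > 1, β > 0, τ > 0, N ∈ ℕ with N ≥ 1, h = 1/N. Let v, v̄ ∈ ℝ^N have strictly positive entries and suppose v solves one step of the implicit Euler scheme with datum v̄, i.e. with cyclic indices, v_i − v̄_i = (ατ/h²)·v_i^{(α−1)/α}·(v_{i+1}^{β/α} − 2v_i^{β/α} + v_{i−1}^{β/α}) for all i. Then Σ_{i=1}^N v_i^{1/α} ≥ Σ_{i=1}^N v̄_i^{1/α}, i.e. the total mass of u_i = v_i^{1/α} does not decrease in one time step. -/

import Mathlib

open Finset

/-- Tangent line inequality for concave rpow. -/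
lemma rpow_tangent_le {x y p : ℝ} (hx : 0 < x) (hy : 0 ≤ y) (hp0 : 0 ≤ p) (hp1 : p ≤ 1) :
    y ^ p ≤ x ^ p + p * x ^ (p - 1) * (y - x) := by
  have hs : (-1 : ℝ) ≤ y / x - 1 := by
    have : 0 ≤ y / x := div_nonneg hy hx.le
    linarith
  have key := rpow_one_add_le_one_add_mul_self hs hp0 hp1
  have h1 : (1 : ℝ) + (y / x - 1) = y / x := by ring
  rw [h1] at key
  have hxp : 0 < x ^ p := Real.rpow_pos_of_pos hx p
  have key2 : (y / x) ^ p * x ^ p ≤ (1 + p * (y / x - 1)) * x ^ p :=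
    mul_le_mul_of_nonneg_right key hxp.le
  have hdiv : (y / x) ^ p * x ^ p = y ^ p := by
    rw [Real.div_rpow hy hx.le, div_mul_cancel₀]
    exact hxp.ne'
  rw [hdiv] at key2
  calc y ^ p ≤ (1 + p * (y / x - 1)) * x ^ p := key2
    _ = x ^ p + p * (x ^ p / x) * (y - x) := by
        field_simp
    _ = x ^ p + p * x ^ (p - 1) * (y - x) := by
        rw [← Real.rpow_sub_one hx.ne']

/-- The total mass of u = v^{1/α} does not decrease along one step of the
implicit Euler scheme. -/
theorem implicit_euler_mass_nondecreasing
    (α β τ : ℝ) (hα : 1 < α) (hβ : 0 < β) (hτ : 0 < τ)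
    (N : ℕ) [NeZero N] (h : ℝ) (hh : h = 1 / N)
    (v vbar : Fin N → ℝ) (hv : ∀ i, 0 < v i) (hvbar : ∀ i, 0 < vbar i)
    (hscheme : ∀ i : Fin N,
      v i - vbar i = α * τ / h ^ 2 * v i ^ ((α - 1) / α) *
        (v (i + 1) ^ (β / α) - 2 * v i ^ (β / α) + v (i - 1) ^ (β / α))) :
    ∑ i : Fin N, vbar i ^ (1 / α) ≤ ∑ i : Fin N, v i ^ (1 / α) := by
  have hα0 : 0 < α := lt_trans one_pos hα
  set p : ℝ := 1 / α with hp
  have hp0 : 0 ≤ p := by positivity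
  have hp1 : p ≤ 1 := by
    rw [hp, div_le_one hα0]; linarith
  set D : Fin N → ℝ := fun i =>
    v (i + 1) ^ (β / α) - 2 * v i ^ (β / α) + v (i - 1) ^ (β / α) with hD
  set c : ℝ := α * τ / h ^ 2 with hc
  -- pointwise tangent bound
  have tangent : ∀ i, vbar i ^ p ≤ v i ^ p + p * (v i) ^ (p - 1) * (vbar i - v i) :=
    fun i => rpow_tangent_le (hv i) (hvbar i).le hp0 hp1
  -- rewrite the correction term using the scheme
  have hcorr : ∀ i, p * (v i) ^ (p - 1) * (vbar i - v i) = -(p * c) * D i := by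
    intro i
    have hvi := hv i
    have := hscheme i
    have hsub : vbar i - v i = -(c * (v i ^ ((α - 1) / α)) * D i) := by
      rw [hD, hc]; linarith [hscheme i]
    rw [hsub]
    have hpow : (v i) ^ (p - 1) * v i ^ ((α - 1) / α) = 1 := by
      rw [← Real.rpow_add hvi]
      have : p - 1 + (α - 1) / α = 0 := by
        rw [hp]; field_simp; ring
      rw [this, Real.rpow_zero]
    calc p * (v i) ^ (p - 1) * -(c * v i ^ ((α - 1) / α) * D i)
        = -(p * c) * ((v i) ^ (p - 1) * v i ^ ((α - 1) / α)) * D i := by ring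
      _ = -(p * c) * D i := by rw [hpow]; ring
  -- sum of cyclic second differences is zero
  have hsumD : ∑ i : Fin N, D i = 0 := by
    have h1 : ∑ i : Fin N, v (i + 1) ^ (β / α) = ∑ i : Fin N, v i ^ (β / α) :=
      Fintype.sum_equiv (Equiv.addRight (1 : Fin N)) _ _ (fun i => rfl)
    have h2 : ∑ i : Fin N, v (i - 1) ^ (β / α) = ∑ i : Fin N, v i ^ (β / α) :=
      Fintype.sum_equiv (Equiv.subRight (1 : Fin N)) _ _ (fun i => rfl)
    simp only [hD]
    rw [Finset.sum_add_distrib, Finset.sum_sub_distrib, h1, h2, ← Finset.mul_sum]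
    ring
  calc ∑ i : Fin N, vbar i ^ p
      ≤ ∑ i : Fin N, (v i ^ p + p * (v i) ^ (p - 1) * (vbar i - v i)) :=
        Finset.sum_le_sum fun i _ => tangent i
    _ = ∑ i : Fin N, v i ^ p + ∑ i : Fin N, (-(p * c) * D i) := by
        rw [← Finset.sum_add_distrib]
        exact Finset.sum_congr rfl fun i _ => by rw [hcorr i]
    _ = ∑ i : Fin N, v i ^ p := by
        rw [← Finset.mul_sum, hsumD, mul_zero, add_zero]
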